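/- Let G be a bipartite graph on n = 3γ vertices without isolated vertices with a unique minimum dominating set of size γ ≥ 2. Then the number of edges of G is at most 2γ + 2⌈γ/2⌉⌊γ/2⌋. -/

import Mathlib

set_option linter.unusedSectionVars false
set_option linter.unusedVariables false
set_option maxHeartbeats 1600000

def IsDomSet {V : Type*} (G : SimpleGraph V) (D : Finset V) : Prop :=
  ∀ v, v ∉ D → ∃ u ∈ D, G.Adj u v

def IsUMDS {V : Type*} (G : SimpleGraph V) (D : Finset V) : Prop :=
  IsDomSet G D ∧ (∀ D', IsDomSet G D' → D.card ≤ D'.card) ∧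
    (∀ D', IsDomSet G D' → D'.card = D.card → D' = D)

lemma nat_prod_le (s t : ℕ) : s * t ≤ ((s + t + 1) / 2) * ((s + t) / 2) := by
  set a := (s + t + 1) / 2 with ha
  set b := (s + t) / 2 with hb
  have h1 : b ≤ a := by omega
  have h2 : a ≤ b + 1 := by omega
  have h3 : a + b = s + t := by omega
  zify
  nlinarith [sq_nonneg ((s : ℤ) - t), sq_nonneg ((a : ℤ) - b)]

open Finset

section UMDS

variable {V : Type*} [Fintype V] [DecidableEq V] {G : SimpleGraph V} [DecidableRel G.Adj]
  {D : Finset V} {γ : ℕ}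

def epnF (G : SimpleGraph V) [DecidableRel G.Adj] (D : Finset V) (v : V) : Finset V :=
  Finset.univ.filter fun w => w ∉ D ∧ G.Adj v w ∧ ∀ u ∈ D, G.Adj u w → u = v

lemma mem_epnF {v w : V} :
    w ∈ epnF G D v ↔ w ∉ D ∧ G.Adj v w ∧ ∀ u ∈ D, G.Adj u w → u = v := by
  simp [epnF]

lemma swap_false (hD : IsUMDS G D) {v w : V} (hv : v ∈ D) (hw : w ∉ D) (hadj : G.Adj v w)
    (hcov : ∀ x, x ∉ D → G.Adj v x → x ≠ w → ∃ u, u ∈ D ∧ u ≠ v ∧ G.Adj u x) : False := by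
  set D' := insert w (D.erase v) with hD'
  have hdom : IsDomSet G D' := by
    intro z hz
    by_cases hzD : z ∈ D
    · by_cases hzv : z = v
      · exact ⟨w, mem_insert_self _ _, by rw [hzv]; exact hadj.symm⟩
      · exact absurd (mem_insert_of_mem (mem_erase.2 ⟨hzv, hzD⟩)) hz
    · have hzw : z ≠ w := fun h => hz (h ▸ mem_insert_self w _)
      obtain ⟨u, hu, huz⟩ := hD.1 z hzD
      by_cases huv : u = v
      · obtain ⟨u', hu', hu'v, hadj'⟩ := hcov z hzD (huv ▸ huz) hzw
        exact ⟨u', mem_insert_of_mem (mem_erase.2 ⟨hu'v, hu'⟩), hadj'⟩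
      · exact ⟨u, mem_insert_of_mem (mem_erase.2 ⟨huv, hu⟩), huz⟩
  have hwD' : w ∉ D.erase v := fun h => hw (mem_of_mem_erase h)
  have hpos : 1 ≤ D.card := card_pos.2 ⟨v, hv⟩
  have hcard' : D'.card = D.card := by
    rw [hD', card_insert_of_notMem hwD', card_erase_of_mem hv]
    omega
  have := hD.2.2 D' hdom hcard'
  exact hw (this ▸ mem_insert_self w _)

lemma erase_false (hD : IsUMDS G D) {v u : V} (hv : v ∈ D) (hu : u ∈ D) (hadj : G.Adj u v)
    (hcov : ∀ x, x ∉ D → G.Adj v x → ∃ u', u' ∈ D ∧ u' ≠ v ∧ G.Adj u' x) : False := by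
  have hdom : IsDomSet G (D.erase v) := by
    intro z hz
    by_cases hzD : z ∈ D
    · have hzv : z = v := by
        by_contra h; exact hz (mem_erase.2 ⟨h, hzD⟩)
      subst hzv
      exact ⟨u, mem_erase.2 ⟨fun h => G.irrefl (h ▸ hadj), hu⟩, hadj⟩
    · obtain ⟨d, hd, hdz⟩ := hD.1 z hzD
      by_cases hdv : d = v
      · obtain ⟨u', hu', hu'v, hadj'⟩ := hcov z hzD (hdv ▸ hdz)
        exact ⟨u', mem_erase.2 ⟨hu'v, hu'⟩, hadj'⟩
      · exact ⟨d, mem_erase.2 ⟨hdv, hd⟩, hdz⟩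
  have h1 := hD.2.1 _ hdom
  have h2 : (D.erase v).card = D.card - 1 := card_erase_of_mem hv
  have hpos : 1 ≤ D.card := card_pos.2 ⟨v, hv⟩
  omega

lemma epn_lower (hD : IsUMDS G D) (hiso : ∀ v : V, ∃ u, G.Adj u v) {v : V} (hv : v ∈ D) :
    2 ≤ (epnF G D v).card := by
  by_contra h
  push_neg at h
  have hle : (epnF G D v).card ≤ 1 := by omega
  -- the "not in epn" unfolding
  have hnot : ∀ x, x ∉ D → G.Adj v x → x ∉ epnF G D v → ∃ u, u ∈ D ∧ u ≠ v ∧ G.Adj u x := by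
    intro x hx hadj hxe
    rw [mem_epnF] at hxe
    push_neg at hxe
    obtain ⟨u, hu, huadj, huv⟩ := hxe hx hadj
    exact ⟨u, hu, huv, huadj⟩
  rcases (epnF G D v).eq_empty_or_nonempty with he | ⟨w, hw⟩
  · -- epn empty
    by_cases hint : ∃ u, u ∈ D ∧ G.Adj u v
    · obtain ⟨u, hu, huv⟩ := hint
      exact erase_false hD hv hu huv (fun x hx hadj => hnot x hx hadj (by simp [he]))
    · obtain ⟨w, hwv⟩ := hiso v
      have hwD : w ∉ D := fun h => hint ⟨w, h, hwv⟩
      exact swap_false hD hv hwD hwv.symm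
        (fun x hx hadj _ => hnot x hx hadj (by simp [he]))
  · -- epn singleton
    have hsing : epnF G D v = {w} := by
      apply Finset.eq_singleton_iff_unique_mem.2
      refine ⟨hw, fun x hx => ?_⟩
      have := Finset.card_le_one.1 hle x hx w hw
      exact this
    rw [mem_epnF] at hw
    exact swap_false hD hv hw.1 hw.2.1
      (fun x hx hadj hxw => hnot x hx hadj (by simp [hsing, hxw]))

lemma struct (hdom : IsDomSet G D)
    (hlow : ∀ v ∈ D, 2 ≤ (epnF G D v).card)
    (hcard : D.card = γ) (hn : Fintype.card V = 3 * γ) :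
    (∀ v ∈ D, (epnF G D v).card = 2) ∧
      (∀ w, w ∉ D → ∃ v ∈ D, w ∈ epnF G D v) := by
  have hdisj : (D : Set V).PairwiseDisjoint (epnF G D) := by
    intro a ha b hb hab
    refine Finset.disjoint_left.2 fun w hwa hwb => ?_
    rw [mem_epnF] at hwa hwb
    exact hab (hwb.2.2 a ha hwa.2.1)
  have hsub : ∀ v ∈ D, epnF G D v ⊆ Dᶜ := by
    intro v _ w hw
    simpa using (mem_epnF.1 hw).1
  have hcompl : Dᶜ.card = 2 * γ := by
    rw [card_compl, hcard, hn]; omega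
  have hbU : D.biUnion (epnF G D) ⊆ Dᶜ := biUnion_subset.2 hsub
  have hsum : ∑ v ∈ D, (epnF G D v).card = (D.biUnion (epnF G D)).card :=
    (card_biUnion hdisj).symm
  have hub : ∑ v ∈ D, (epnF G D v).card ≤ 2 * γ := by
    rw [hsum, ← hcompl]; exact card_le_card hbU
  have hlb : 2 * γ ≤ ∑ v ∈ D, (epnF G D v).card := by
    calc 2 * γ = ∑ _v ∈ D, 2 := by rw [Finset.sum_const, hcard]; ring
    _ ≤ _ := Finset.sum_le_sum hlow
  have hSeq : ∑ v ∈ D, (epnF G D v).card = 2 * γ := le_antisymm hub hlb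
  constructor
  · intro v hv
    have h1 : (epnF G D v).card + ∑ u ∈ D.erase v, (epnF G D u).card = 2 * γ := by
      rw [← hSeq]; exact Finset.add_sum_erase _ (fun u => (epnF G D u).card) hv
    have h2 : 2 * (γ - 1) ≤ ∑ u ∈ D.erase v, (epnF G D u).card := by
      calc 2 * (γ - 1) = ∑ _u ∈ D.erase v, 2 := by
            rw [Finset.sum_const, card_erase_of_mem hv, hcard]; ring
      _ ≤ _ := Finset.sum_le_sum (fun u hu => hlow u (mem_of_mem_erase hu))
    have h3 := hlow v hv
    have hγ1 : 1 ≤ γ := by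
      have := card_pos.2 ⟨v, hv⟩; omega
    omega
  · intro w hw
    have heq : D.biUnion (epnF G D) = Dᶜ := by
      apply Finset.eq_of_subset_of_card_le hbU
      rw [hcompl, ← hSeq, hsum]
    have : w ∈ D.biUnion (epnF G D) := by
      rw [heq]; simpa using hw
    simpa using this

lemma epn_eq_pair (h2 : ∀ v ∈ D, (epnF G D v).card = 2) {i w w' : V} (hi : i ∈ D)
    (hw : w ∈ epnF G D i) (hw' : w' ∈ epnF G D i) (hww' : w ≠ w') :
    epnF G D i = {w, w'} := by
  refine (Finset.eq_of_subset_of_card_le ?_ ?_).symm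
  · intro z hz
    rcases Finset.mem_insert.1 hz with h | h
    · exact h ▸ hw
    · exact (Finset.mem_singleton.1 h) ▸ hw'
  · rw [h2 i hi, Finset.card_insert_of_notMem (by simpa using hww'), Finset.card_singleton]

lemma epn_ne {i j w x : V} (hi : i ∈ D) (hj : j ∈ D) (hij : i ≠ j)
    (hw : w ∈ epnF G D i) (hx : x ∈ epnF G D j) : w ≠ x := by
  rintro rfl
  rw [mem_epnF] at hw hx
  exact hij (hx.2.2 i hi hw.2.1)

lemma star_false (hD : IsUMDS G D)
    (hcover : ∀ z, z ∉ D → ∃ v ∈ D, z ∈ epnF G D v)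
    (h2 : ∀ v ∈ D, (epnF G D v).card = 2)
    {i j w x x' : V} (hi : i ∈ D) (hj : j ∈ D) (hij : i ≠ j) (hadjij : G.Adj i j)
    (hw : w ∈ epnF G D i) (hx : x ∈ epnF G D j) (hx' : x' ∈ epnF G D j) (hxx' : x ≠ x')
    (hwx : G.Adj w x) (hwx' : G.Adj w x') : False := by
  obtain ⟨hwD, hwi, -⟩ := mem_epnF.1 hw
  have hepnj : epnF G D j = {x, x'} := epn_eq_pair h2 hj hx hx' hxx'
  set D' := insert w (D.erase j) with hD'
  have hdom : IsDomSet G D' := by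
    intro z hz
    by_cases hzD : z ∈ D
    · have hzj : z = j := by
        by_contra h; exact hz (mem_insert_of_mem (mem_erase.2 ⟨h, hzD⟩))
      exact ⟨i, mem_insert_of_mem (mem_erase.2 ⟨hij, hi⟩), hzj ▸ hadjij⟩
    · obtain ⟨v, hv, hzv⟩ := hcover z hzD
      by_cases hvj : v = j
      · have : z ∈ ({x, x'} : Finset V) := hepnj ▸ (hvj ▸ hzv)
        rcases Finset.mem_insert.1 this with h | h
        · exact ⟨w, mem_insert_self _ _, h ▸ hwx⟩
        · exact ⟨w, mem_insert_self _ _, (Finset.mem_singleton.1 h) ▸ hwx'⟩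
      · exact ⟨v, mem_insert_of_mem (mem_erase.2 ⟨hvj, hv⟩), (mem_epnF.1 hzv).2.1⟩
  have hpos : 1 ≤ D.card := card_pos.2 ⟨j, hj⟩
  have hcard' : D'.card = D.card := by
    rw [hD', card_insert_of_notMem (fun h => hwD (mem_of_mem_erase h)),
      card_erase_of_mem hj]
    omega
  have := hD.2.2 D' hdom hcard'
  exact hwD (this ▸ mem_insert_self w _)

lemma ind_false (hD : IsUMDS G D)
    (hcover : ∀ z, z ∉ D → ∃ v ∈ D, z ∈ epnF G D v)
    (h2 : ∀ v ∈ D, (epnF G D v).card = 2)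
    {i j w w' x x' : V} (hi : i ∈ D) (hj : j ∈ D) (hij : i ≠ j)
    (hw : w ∈ epnF G D i) (hw' : w' ∈ epnF G D i) (hww' : w ≠ w')
    (hx : x ∈ epnF G D j) (hx' : x' ∈ epnF G D j) (hxx' : x ≠ x')
    (hwx : G.Adj w x) (hw'x' : G.Adj w' x') : False := by
  obtain ⟨hwD, hwi, -⟩ := mem_epnF.1 hw
  obtain ⟨hx'D, hx'j, -⟩ := mem_epnF.1 hx'
  have hepni : epnF G D i = {w, w'} := epn_eq_pair h2 hi hw hw' hww'
  have hepnj : epnF G D j = {x, x'} := epn_eq_pair h2 hj hx hx' hxx'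
  have hwx' : w ≠ x' := epn_ne hi hj hij hw hx'
  set D' := insert w (insert x' ((D.erase i).erase j)) with hD'
  have hdom : IsDomSet G D' := by
    intro z hz
    by_cases hzD : z ∈ D
    · by_cases hzi : z = i
      · exact ⟨w, mem_insert_self _ _, hzi ▸ hwi.symm⟩
      · by_cases hzj : z = j
        · exact ⟨x', mem_insert_of_mem (mem_insert_self _ _), hzj ▸ hx'j.symm⟩
        · exact absurd (mem_insert_of_mem (mem_insert_of_mem
            (mem_erase.2 ⟨hzj, mem_erase.2 ⟨hzi, hzD⟩⟩))) hz
    · obtain ⟨v, hv, hzv⟩ := hcover z hzD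
      by_cases hvi : v = i
      · have : z ∈ ({w, w'} : Finset V) := hepni ▸ (hvi ▸ hzv)
        rcases Finset.mem_insert.1 this with h | h
        · exact absurd (h ▸ mem_insert_self w _) hz
        · exact ⟨x', mem_insert_of_mem (mem_insert_self _ _),
            (Finset.mem_singleton.1 h) ▸ hw'x'.symm⟩
      · by_cases hvj : v = j
        · have : z ∈ ({x, x'} : Finset V) := hepnj ▸ (hvj ▸ hzv)
          rcases Finset.mem_insert.1 this with h | h
          · exact ⟨w, mem_insert_self _ _, h ▸ hwx⟩
          · exact absurd ((Finset.mem_singleton.1 h) ▸ mem_insert_of_mem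
              (mem_insert_self x' _)) hz
        · exact ⟨v, mem_insert_of_mem (mem_insert_of_mem
            (mem_erase.2 ⟨hvj, mem_erase.2 ⟨hvi, hv⟩⟩)), (mem_epnF.1 hzv).2.1⟩
  have hpos : 1 < D.card := Finset.one_lt_card.2 ⟨i, hi, j, hj, hij⟩
  have hjmem : j ∈ D.erase i := mem_erase.2 ⟨fun h => hij h.symm, hj⟩
  have hcard' : D'.card = D.card := by
    have h1 : x' ∉ (D.erase i).erase j := fun h => hx'D (mem_of_mem_erase (mem_of_mem_erase h))
    have h2 : w ∉ insert x' ((D.erase i).erase j) := by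
      intro h
      rcases Finset.mem_insert.1 h with h | h
      · exact hwx' h
      · exact hwD (mem_of_mem_erase (mem_of_mem_erase h))
    rw [hD', card_insert_of_notMem h2, card_insert_of_notMem h1,
      card_erase_of_mem hjmem, card_erase_of_mem hi]
    omega
  have := hD.2.2 D' hdom hcard'
  exact hwD (this ▸ mem_insert_self w _)

lemma fiber_le (hD : IsUMDS G D)
    (hcover : ∀ z, z ∉ D → ∃ v ∈ D, z ∈ epnF G D v)
    (h2 : ∀ v ∈ D, (epnF G D v).card = 2)
    {i j : V} (hi : i ∈ D) (hj : j ∈ D) (hij : i ≠ j)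
    (φ : V → V) (hφD : ∀ w ∈ D, φ w = w) (hφ : ∀ w, w ∉ D → w ∈ epnF G D (φ w))
    (A23 : Finset (V × V)) (hA23 : ∀ p ∈ A23, G.Adj p.1 p.2 ∧ (p.1 ∈ D ↔ p.2 ∈ D)) :
    (A23.filter fun p => (φ p.1, φ p.2) = (i, j)).card ≤ 2 := by
  set F := A23.filter fun p => (φ p.1, φ p.2) = (i, j) with hF
  -- classification of fiber elements
  have hclass : ∀ p ∈ F, (p = (i, j) ∧ G.Adj i j) ∨
      (p.1 ∈ epnF G D i ∧ p.2 ∈ epnF G D j ∧ G.Adj p.1 p.2) := by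
    intro p hp
    rw [hF, Finset.mem_filter, Prod.mk.injEq] at hp
    obtain ⟨hpA, hp1, hp2⟩ := hp
    obtain ⟨hadj, hiff⟩ := hA23 p hpA
    by_cases h1 : p.1 ∈ D
    · have h2' : p.2 ∈ D := hiff.1 h1
      rw [hφD _ h1] at hp1
      rw [hφD _ h2'] at hp2
      left
      refine ⟨Prod.ext hp1 hp2, ?_⟩
      rw [← hp1, ← hp2]; exact hadj
    · have h2' : p.2 ∉ D := fun h => h1 (hiff.2 h)
      right
      exact ⟨hp1 ▸ hφ p.1 h1, hp2 ▸ hφ p.2 h2', hadj⟩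
  by_contra hcon
  push_neg at hcon
  obtain ⟨p, hp, q, hq, r, hr, hpq, hpr, hqr⟩ := Finset.two_lt_card.1 hcon
  -- rights pairwise: either differ in both coords (IND kills) or share exactly one (star)
  have hR : ∀ s t : V × V, s ∈ F → t ∈ F → s ≠ t →
      (s.1 ∈ epnF G D i ∧ s.2 ∈ epnF G D j ∧ G.Adj s.1 s.2) →
      (t.1 ∈ epnF G D i ∧ t.2 ∈ epnF G D j ∧ G.Adj t.1 t.2) →
      ((s.1 = t.1 ∧ s.2 ≠ t.2) ∨ (s.1 ≠ t.1 ∧ s.2 = t.2)) := by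
    intro s t _ _ hst hs ht
    by_cases h1 : s.1 = t.1
    · left
      refine ⟨h1, fun h2' => hst (Prod.ext h1 h2')⟩
    · by_cases h2' : s.2 = t.2
      · right; exact ⟨h1, h2'⟩
      · exact absurd (ind_false hD hcover h2 hi hj hij hs.1 ht.1 h1 hs.2.1 ht.2.1 h2'
          hs.2.2 ht.2.2) (fun h => h)
  -- a shared-coordinate pair of rights forbids the edge ij
  have hS : ∀ s t : V × V, s ≠ t →
      (s.1 ∈ epnF G D i ∧ s.2 ∈ epnF G D j ∧ G.Adj s.1 s.2) →
      (t.1 ∈ epnF G D i ∧ t.2 ∈ epnF G D j ∧ G.Adj t.1 t.2) →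
      G.Adj i j → False := by
    intro s t hst hs ht hadjij
    by_cases h1 : s.1 = t.1
    · have h2' : s.2 ≠ t.2 := fun h => hst (Prod.ext h1 h)
      exact star_false hD hcover h2 hi hj hij hadjij hs.1 hs.2.1 ht.2.1 h2' hs.2.2
        (h1 ▸ ht.2.2)
    · by_cases h2' : s.2 = t.2
      · exact star_false hD hcover h2 hj hi (Ne.symm hij) hadjij.symm hs.2.1 hs.1 ht.1 h1
          hs.2.2.symm (h2' ▸ ht.2.2.symm)
      · exact ind_false hD hcover h2 hi hj hij hs.1 ht.1 h1 hs.2.1 ht.2.1 h2' hs.2.2 ht.2.2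
  -- case bash on classification of p, q, r
  have hthree : ∀ s t u : V × V, s ∈ F → t ∈ F → u ∈ F → s ≠ t → s ≠ u → t ≠ u →
      (s.1 ∈ epnF G D i ∧ s.2 ∈ epnF G D j ∧ G.Adj s.1 s.2) →
      (t.1 ∈ epnF G D i ∧ t.2 ∈ epnF G D j ∧ G.Adj t.1 t.2) →
      (u.1 ∈ epnF G D i ∧ u.2 ∈ epnF G D j ∧ G.Adj u.1 u.2) → False := by
    intro s t u hsF htF huF hst hsu htu hs ht hu
    rcases hR s t hsF htF hst hs ht with ⟨e1, e2⟩ | ⟨e1, e2⟩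
    · rcases hR s u hsF huF hsu hs hu with ⟨f1, f2⟩ | ⟨f1, f2⟩
      · rcases hR t u htF huF htu ht hu with ⟨g1, g2⟩ | ⟨g1, g2⟩
        · -- seconds pairwise distinct, all in epnF j of card 2
          have hpair : epnF G D j = {s.2, t.2} := epn_eq_pair h2 hj hs.2.1 ht.2.1 e2
          have hu2 : u.2 ∈ ({s.2, t.2} : Finset V) := hpair ▸ hu.2.1
          rcases Finset.mem_insert.1 hu2 with h | h
          · exact f2 h.symm
          · exact g2 (Finset.mem_singleton.1 h).symm
        · exact g1 (e1.symm.trans f1)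
      · rcases hR t u htF huF htu ht hu with ⟨g1, g2⟩ | ⟨g1, g2⟩
        · exact f1 (e1.trans g1)
        · exact e2 (f2.trans g2.symm)
    · rcases hR s u hsF huF hsu hs hu with ⟨f1, f2⟩ | ⟨f1, f2⟩
      · rcases hR t u htF huF htu ht hu with ⟨g1, g2⟩ | ⟨g1, g2⟩
        · exact e1 (f1.trans g1.symm)
        · exact f2 (e2.trans g2)
      · rcases hR t u htF huF htu ht hu with ⟨g1, g2⟩ | ⟨g1, g2⟩
        · exact g2 (e2.symm.trans f2)
        · -- firsts pairwise distinct, all in epnF i of card 2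
          have hpair : epnF G D i = {s.1, t.1} := epn_eq_pair h2 hi hs.1 ht.1 e1
          have hu1 : u.1 ∈ ({s.1, t.1} : Finset V) := hpair ▸ hu.1
          rcases Finset.mem_insert.1 hu1 with h | h
          · exact f1 h.symm
          · exact g1 (Finset.mem_singleton.1 h).symm
  rcases hclass p hp with hpL | hpR
  · rcases hclass q hq with hqL | hqR
    · exact hpq (hpL.1.trans hqL.1.symm)
    · rcases hclass r hr with hrL | hrR
      · exact hpr (hpL.1.trans hrL.1.symm)
      · exact hS q r hqr hqR hrR hpL.2
  · rcases hclass q hq with hqL | hqR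
    · rcases hclass r hr with hrL | hrR
      · exact hqr (hqL.1.trans hrL.1.symm)
      · exact hS p r hpr hpR hrR hqL.2
    · rcases hclass r hr with hrL | hrR
      · exact hS p q hpq hpR hqR hrL.2
      · exact hthree p q r hp hq hr hpq hpr hqr hpR hqR hrR

end UMDS

theorem stmt14 {V : Type*} [Fintype V] (G : SimpleGraph V) (γ : ℕ) (hγ : 2 ≤ γ)
    (hn : Fintype.card V = 3 * γ)
    (hbip : G.Colorable 2)
    (hiso : ∀ v : V, ∃ u, G.Adj u v)
    (D : Finset V) (hD : IsUMDS G D) (hcard : D.card = γ) :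
    G.edgeSet.ncard ≤ 2 * γ + 2 * ((γ + 1) / 2) * (γ / 2) := by
  classical
  obtain ⟨C⟩ := hbip
  have hlow : ∀ v ∈ D, 2 ≤ (epnF G D v).card := fun v hv => by
    by_contra h
    exact epn_lower hD hiso hv |>.not_gt (by omega)
  obtain ⟨h2, hcover⟩ := struct hD.1 hlow hcard hn
  set φ : V → V := fun w => if h : w ∈ D then w else (hcover w h).choose with hφdef
  have hφD : ∀ w ∈ D, φ w = w := fun w hw => dif_pos hw
  have hφspec : ∀ w (hw : w ∉ D), φ w = (hcover w hw).choose := fun w hw => dif_neg hw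
  have hφ : ∀ w, w ∉ D → w ∈ epnF G D (φ w) := by
    intro w hw
    rw [hφspec w hw]
    exact (hcover w hw).choose_spec.2
  have hφmem : ∀ w, w ∉ D → φ w ∈ D := by
    intro w hw
    rw [hφspec w hw]
    exact (hcover w hw).choose_spec.1
  set A := (Finset.univ : Finset (V × V)).filter fun p => G.Adj p.1 p.2 with hAdef
  have hA : 2 * G.edgeFinset.card = A.card := by
    rw [SimpleGraph.two_mul_card_edgeFinset]
  have hmemA : ∀ p : V × V, p ∈ A ↔ G.Adj p.1 p.2 := by
    intro p; simp [hAdef]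
  set A23 := A.filter (fun p => (p.1 ∈ D ↔ p.2 ∈ D)) with hA23def
  set A1 := A.filter (fun p => ¬(p.1 ∈ D ↔ p.2 ∈ D)) with hA1def
  have hsplit : A23.card + A1.card = A.card :=
    Finset.card_filter_add_card_filter_not _
  have hcompl : Dᶜ.card = 2 * γ := by
    rw [Finset.card_compl, hcard, hn]; omega
  -- bound on A1
  have hA1le : A1.card ≤ 2 * Dᶜ.card := by
    apply Finset.card_le_mul_card_image_of_maps_to
      (f := fun p : V × V => if p.1 ∈ D then p.2 else p.1) (t := Dᶜ)
    · intro p hp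
      rw [hA1def, Finset.mem_filter] at hp
      by_cases h1 : p.1 ∈ D
      · have h2' : p.2 ∉ D := fun h => hp.2 ⟨fun _ => h, fun _ => h1⟩
        simp [h1, h2']
      · simp [h1]
    · intro b hb
      have hbD : b ∉ D := by simpa using hb
      have hsub : (A1.filter fun p => (if p.1 ∈ D then p.2 else p.1) = b) ⊆
          {(φ b, b), (b, φ b)} := by
        intro p hp
        rw [Finset.mem_filter, hA1def, Finset.mem_filter] at hp
        obtain ⟨⟨hpA, hpx⟩, hpb⟩ := hp
        have hadj : G.Adj p.1 p.2 := (hmemA p).1 hpA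
        have huniq := (mem_epnF.1 (hφ b hbD)).2.2
        by_cases h1 : p.1 ∈ D
        · have h2' : p.2 ∉ D := fun h => hpx ⟨fun _ => h, fun _ => h1⟩
          rw [if_pos h1] at hpb
          have : p.1 = φ b := huniq p.1 h1 (hpb ▸ hadj)
          have hpe : p = (φ b, b) := Prod.ext this hpb
          simp [hpe]
        · have h2' : p.2 ∈ D := by
            by_contra h
            exact hpx ⟨fun hh => absurd hh h1, fun hh => absurd hh h⟩
          rw [if_neg h1] at hpb
          have : p.2 = φ b := huniq p.2 h2' (hpb ▸ hadj.symm)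
          have hpe : p = (b, φ b) := Prod.ext hpb this
          simp [hpe]
      calc (A1.filter fun p => (if p.1 ∈ D then p.2 else p.1) = b).card
          ≤ ({(φ b, b), (b, φ b)} : Finset (V × V)).card := Finset.card_le_card hsub
        _ ≤ 2 := (Finset.card_insert_le _ _).trans (by simp)
  -- bound on A23
  set D0 := D.filter (fun v => C v = 0) with hD0def
  set D1 := D.filter (fun v => ¬(C v = 0)) with hD1def
  set B := (D0 ×ˢ D1) ∪ (D1 ×ˢ D0) with hBdef
  have hBmem : ∀ i j : V, i ∈ D → j ∈ D → C i ≠ C j → (i, j) ∈ B := by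
    intro i j hi hj hne
    have h0 : (C i).val < 2 := (C i).isLt
    have h1 : (C j).val < 2 := (C j).isLt
    have hne' : (C i).val ≠ (C j).val := fun h => hne (Fin.ext h)
    by_cases hci : C i = 0
    · have hcj : ¬(C j = 0) := fun h => hne (hci.trans h.symm)
      exact Finset.mem_union_left _ (Finset.mem_product.2
        ⟨Finset.mem_filter.2 ⟨hi, hci⟩, Finset.mem_filter.2 ⟨hj, hcj⟩⟩)
    · have hcj : C j = 0 := by
        have : (C i).val ≠ 0 := fun h => hci (Fin.ext h)
        have : (C j).val = 0 := by omega
        exact Fin.ext this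
      exact Finset.mem_union_right _ (Finset.mem_product.2
        ⟨Finset.mem_filter.2 ⟨hi, hci⟩, Finset.mem_filter.2 ⟨hj, hcj⟩⟩)
  have hBD : ∀ q : V × V, q ∈ B → q.1 ∈ D ∧ q.2 ∈ D ∧ C q.1 ≠ C q.2 := by
    intro q hq
    rw [hBdef] at hq
    rcases Finset.mem_union.1 hq with h | h <;>
      obtain ⟨ha, hb⟩ := Finset.mem_product.1 h <;>
      rw [hD0def, hD1def] at * <;>
      simp only [Finset.mem_filter] at ha hb
    · exact ⟨ha.1, hb.1, fun h => hb.2 (h ▸ ha.2)⟩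
    · exact ⟨ha.1, hb.1, fun h => ha.2 (h.symm ▸ hb.2)⟩
  have hmaps : ∀ p ∈ A23, (φ p.1, φ p.2) ∈ B := by
    intro p hp
    rw [hA23def, Finset.mem_filter] at hp
    have hadj : G.Adj p.1 p.2 := (hmemA p).1 hp.1
    have hcp : C p.1 ≠ C p.2 := C.valid hadj
    by_cases h1 : p.1 ∈ D
    · have h2' : p.2 ∈ D := hp.2.1 h1
      rw [hφD _ h1, hφD _ h2']
      exact hBmem _ _ h1 h2' hcp
    · have h2' : p.2 ∉ D := fun h => h1 (hp.2.2 h)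
      have e1 : C (φ p.1) ≠ C p.1 := C.valid (mem_epnF.1 (hφ p.1 h1)).2.1
      have e2 : C (φ p.2) ≠ C p.2 := C.valid (mem_epnF.1 (hφ p.2 h2')).2.1
      have : C (φ p.1) ≠ C (φ p.2) := by
        have a0 := (C (φ p.1)).isLt
        have a1 := (C (φ p.2)).isLt
        have a2 := (C p.1).isLt
        have a3 := (C p.2).isLt
        have b0 : (C (φ p.1)).val ≠ (C p.1).val := fun h => e1 (Fin.ext h)
        have b1 : (C (φ p.2)).val ≠ (C p.2).val := fun h => e2 (Fin.ext h)
        have b2 : (C p.1).val ≠ (C p.2).val := fun h => hcp (Fin.ext h)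
        intro h
        have : (C (φ p.1)).val = (C (φ p.2)).val := congrArg Fin.val h
        omega
      exact hBmem _ _ (hφmem _ h1) (hφmem _ h2') this
  have hA23le : A23.card ≤ 2 * B.card := by
    apply Finset.card_le_mul_card_image_of_maps_to hmaps
    intro b hb
    obtain ⟨i, j⟩ := b
    obtain ⟨hi, hj, hcij⟩ := hBD _ hb
    have hij : i ≠ j := fun h => hcij (h ▸ rfl)
    have := fiber_le hD hcover h2 hi hj hij φ hφD hφ A23 (by
      intro p hp
      rw [hA23def, Finset.mem_filter] at hp
      exact ⟨(hmemA p).1 hp.1, hp.2⟩)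
    exact this
  have hBcard : B.card ≤ D0.card * D1.card + D1.card * D0.card := by
    refine (Finset.card_union_le _ _).trans ?_
    rw [Finset.card_product, Finset.card_product]
  have hst : D0.card + D1.card = γ := by
    rw [hD0def, hD1def, Finset.card_filter_add_card_filter_not, hcard]
  have harith1 : D0.card * D1.card ≤ ((γ + 1) / 2) * (γ / 2) := by
    have := nat_prod_le D0.card D1.card
    rwa [hst] at this
  have harith2 : D1.card * D0.card ≤ ((γ + 1) / 2) * (γ / 2) := by
    have h := nat_prod_le D1.card D0.card
    have hst' : D1.card + D0.card = γ := by omega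
    rwa [hst'] at h
  have hedge : G.edgeSet.ncard = G.edgeFinset.card := by
    rw [← SimpleGraph.coe_edgeFinset, Set.ncard_coe_finset]
  rw [hedge]
  have hfin : 2 * G.edgeFinset.card ≤ 4 * γ + 4 * (((γ + 1) / 2) * (γ / 2)) := by
    calc 2 * G.edgeFinset.card = A23.card + A1.card := by rw [hA, hsplit]
      _ ≤ 2 * B.card + 2 * Dᶜ.card := Nat.add_le_add hA23le hA1le
      _ ≤ 2 * (D0.card * D1.card + D1.card * D0.card) + 2 * (2 * γ) := by
          rw [hcompl]
          exact Nat.add_le_add_right (Nat.mul_le_mul_left _ hBcard) _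
      _ ≤ 2 * (((γ + 1) / 2) * (γ / 2) + ((γ + 1) / 2) * (γ / 2)) + 2 * (2 * γ) := by
          exact Nat.add_le_add_right (Nat.mul_le_mul_left _ (Nat.add_le_add harith1 harith2)) _
      _ = 4 * γ + 4 * (((γ + 1) / 2) * (γ / 2)) := by ring
  have hgoal : 2 * ((γ + 1) / 2) * (γ / 2) = 2 * (((γ + 1) / 2) * (γ / 2)) := by ring
  omega
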